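/- arXiv:1411.0522 — 2 statements merged into one kernel-verified Lean document; each statement's English description precedes it below -/
import Mathlib

section
/- Star immersion from an auxiliary-graph star: Let G be a graph, W ⊆ V(G), m an integer, and F a graph with |V(F)| ≥ 2 and m ≥ 2|E(F)|. If G(m,W) contains a subtree T with a non-leaf vertex c and leaf set Z with |Z| = |V(F)|, then G contains F as a strong immersion. (Hence the branch vertices of F can be taken in Z and all connecting paths routed through the hub c.) -/
open scoped Classical

/-- A multigraph: possibly parallel edges and loops, given by source/target maps
(the orientation is irrelevant; walks may traverse edges in either direction). -/
structure Multigraph (V : Type*) (E : Type*) where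
  src : E → V
  tgt : E → V

namespace Multigraph

variable {V E V' E' : Type*}

/-- Walks in a multigraph, traversing edges in either direction. -/
inductive Walk (G : Multigraph V E) : V → V → Type _
  | nil (v : V) : Walk G v v
  | cons {u v w : V} (e : E) (hs : G.src e = u) (ht : G.tgt e = v) (p : Walk G v w) : Walk G u w
  | cons' {u v w : V} (e : E) (hs : G.src e = v) (ht : G.tgt e = u) (p : Walk G v w) : Walk G u w

def Walk.edges {G : Multigraph V E} : ∀ {u v : V}, G.Walk u v → List E
  | _, _, .nil _ => []
  | _, _, .cons e _ _ p => e :: p.edges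
  | _, _, .cons' e _ _ p => e :: p.edges

def Walk.support {G : Multigraph V E} : ∀ {u v : V}, G.Walk u v → List V
  | u, _, .nil _ => [u]
  | u, _, .cons _ _ _ p => u :: p.support
  | u, _, .cons' _ _ _ p => u :: p.support

/-- An edge is incident with a vertex. -/
def Inc (G : Multigraph V E) (e : E) (v : V) : Prop := G.src e = v ∨ G.tgt e = v

/-- The end of an edge other than `v`. -/
noncomputable def otherEnd (G : Multigraph V E) (v : V) (e : E) : V :=
  if G.src e = v then G.tgt e else G.src e

lemma otherEnd_ne (G : Multigraph V E) {v : V} {e : E} (hinc : G.Inc e v)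
    (hnl : ¬ (G.src e = v ∧ G.tgt e = v)) : G.otherEnd v e ≠ v := by
  unfold otherEnd
  split_ifs with h
  · exact fun ht => hnl ⟨h, ht⟩
  · exact fun hs => (hinc.elim h (fun ht => h (by
      exact absurd hs (fun hs' => h hs')))) |>.elim
  
/-- Degree of a vertex (each loop counts twice). -/
noncomputable def degree (G : Multigraph V E) (v : V) : ℕ :=
  Set.ncard {e | G.src e = v} + Set.ncard {e | G.tgt e = v}

/-- The edge cut determined by a vertex set `S`: edges with exactly one end in `S`. -/
def cutEdges (G : Multigraph V E) (S : Set V) : Set E :=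
  {e | (G.src e ∈ S ∧ G.tgt e ∉ S) ∨ (G.src e ∉ S ∧ G.tgt e ∈ S)}

/-- A set `W` is `k`-edge-connected in `G`: no edge cut of size `< k` separates
two vertices of `W`. -/
def EdgeConnSet (G : Multigraph V E) (k : ℕ) (W : Set V) : Prop :=
  ∀ S : Set V, (G.cutEdges S).ncard < k → ∀ x ∈ W, ∀ y ∈ W, (x ∈ S ↔ y ∈ S)

/-- There exist `k` pairwise edge-disjoint paths (trails) from `u` to `v`. -/
def EDWalks (G : Multigraph V E) (u v : V) (k : ℕ) : Prop :=
  ∃ P : Fin k → G.Walk u v, (∀ i, (P i).edges.Nodup) ∧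
    ∀ i j, i ≠ j → ∀ e ∈ (P i).edges, e ∉ (P j).edges

/-- The neighbourhood of `v`: vertices other than `v` joined to `v` by an edge. -/
def nbhd (G : Multigraph V E) (v : V) : Set V :=
  {u | u ≠ v ∧ ∃ e, (G.src e = v ∧ G.tgt e = u) ∨ (G.src e = u ∧ G.tgt e = v)}

/-- A strong immersion of `H` in `G`. -/
structure StrongImm (H : Multigraph V' E') (G : Multigraph V E) where
  vmap : V' → V
  vinj : Function.Injective vmap
  path : ∀ e : E', G.Walk (vmap (H.src e)) (vmap (H.tgt e))
  edges_nodup : ∀ e, (path e).edges.Nodup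
  edisj : ∀ e f, e ≠ f → ∀ x ∈ (path e).edges, x ∉ (path f).edges
  avoid : ∀ (e : E') (u : V'), u ≠ H.src e → u ≠ H.tgt e → vmap u ∉ (path e).support

def StrongImmersion (H : Multigraph V' E') (G : Multigraph V E) : Prop :=
  Nonempty (StrongImm H G)

/-- A weak immersion of `H` in `G`. -/
structure WeakImm (H : Multigraph V' E') (G : Multigraph V E) where
  vmap : V' → V
  vinj : Function.Injective vmap
  path : ∀ e : E', G.Walk (vmap (H.src e)) (vmap (H.tgt e))
  edges_nodup : ∀ e, (path e).edges.Nodup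
  edisj : ∀ e f, e ≠ f → ∀ x ∈ (path e).edges, x ∉ (path f).edges

def WeakImmersion (H : Multigraph V' E') (G : Multigraph V E) : Prop :=
  Nonempty (WeakImm H G)

/-- The complete graph `K n` as a multigraph. -/
def completeMG (n : ℕ) : Multigraph (Fin n) {p : Fin n × Fin n // p.1 < p.2} :=
  ⟨fun p => p.1.1, fun p => p.1.2⟩

/-- A path-like decomposition of the part of `G` induced on `S`, with respect to
an ordered set `X ⊆ S`: an ordering of `X` and a near-partition of `S \ X` into bags. -/
structure PathLikeDecomp (G : Multigraph V E) (S : Set V) (X : Set V) where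
  t : ℕ
  ord : Fin t → V
  ord_inj : Function.Injective ord
  ord_range : Set.range ord = X
  bag : Fin (t + 1) → Set V
  bag_disj : ∀ i j, i ≠ j → Disjoint (bag i) (bag j)
  bag_union : (⋃ i, bag i) = S \ X

namespace PathLikeDecomp

variable {G : Multigraph V E} {S X : Set V} (P : PathLikeDecomp G S X)

/-- Vertices strictly to the left of the `i`-th ordered vertex. -/
def leftSet (i : Fin P.t) : Set V :=
  {v | ∃ j, j < i ∧ v = P.ord j} ∪ ⋃ (j : Fin (P.t + 1)) (_ : (j : ℕ) ≤ (i : ℕ)), P.bag j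

/-- Vertices strictly to the right of the `i`-th ordered vertex. -/
def rightSet (i : Fin P.t) : Set V :=
  {v | ∃ j, i < j ∧ v = P.ord j} ∪ ⋃ (j : Fin (P.t + 1)) (_ : (i : ℕ) < (j : ℕ)), P.bag j

/-- The `x_i`-cut of the decomposition. -/
def cutAt (i : Fin P.t) : Set E :=
  {e | (G.src e ∈ P.leftSet i ∧ G.tgt e ∈ P.rightSet i) ∨
       (G.src e ∈ P.rightSet i ∧ G.tgt e ∈ P.leftSet i)}

/-- The decomposition has width less than `w`. -/
def WidthLt (w : ℕ) : Prop := ∀ i, (P.cutAt i).ncard < w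

/-- A set `Z` is `p`-bounded in the decomposition. -/
def Bounded (p : ℕ) (Z : Set V) : Prop :=
  (X ∩ Z).ncard + Set.ncard {j : Fin (P.t + 1) | (P.bag j ∩ Z).Nonempty} ≤ p

end PathLikeDecomp

/-- `W` is `(a,w,p)`-linear in `G`. -/
def Linear (G : Multigraph V E) (W : Set V) (a w p : ℕ) : Prop :=
  ∃ A : Set V, A ⊆ W ∧ A.ncard ≤ a ∧
    ∃ P : PathLikeDecomp G {v | v ∉ A} (W \ A), P.WidthLt w ∧
      ∀ v ∈ A, P.Bounded p (G.nbhd v)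

/-- A graph is `α`-basic if the set of its vertices of degree at least `α` is `α`-linear. -/
def Basic (G : Multigraph V E) (α : ℕ) : Prop :=
  Linear G {v | α ≤ G.degree v} α α α

/-- A tree-cut decomposition of `G` indexed by a tree on `τ`. -/
structure TreeCutDecomp (G : Multigraph V E) (τ : Type*) where
  tree : SimpleGraph τ
  tree_isTree : tree.IsTree
  bag : τ → Set V
  bag_disj : ∀ i j, i ≠ j → Disjoint (bag i) (bag j)
  bag_union : (⋃ i, bag i) = Set.univ

namespace TreeCutDecomp

variable {τ : Type*} {G : Multigraph V E} (D : TreeCutDecomp G τ)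

/-- The union of the bags on the `v`-side of the tree edge `uv`. -/
def sideVerts (u v : τ) : Set V :=
  ⋃ (x : τ) (_ : (D.tree.deleteEdges {s(u, v)}).Reachable v x), D.bag x

/-- The edge cut of `G` determined by the tree edge `uv`. -/
def edgeCut (u v : τ) : Set E := G.cutEdges (D.sideVerts u v)

/-- The adhesion of the decomposition. -/
noncomputable def adhesion : ℕ :=
  sSup {n | ∃ u v, D.tree.Adj u v ∧ n = (D.edgeCut u v).ncard}

/-- The decomposition has adhesion less than `α`. -/
def AdhesionLt (α : ℕ) : Prop := ∀ u v, D.tree.Adj u v → (D.edgeCut u v).ncard < α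

lemma exists_bag (v : V) : ∃ t, v ∈ D.bag t :=
  Set.mem_iUnion.mp (D.bag_union.symm ▸ Set.mem_univ v)

/-- The tree node whose bag contains `v`. -/
noncomputable def nodeOf (v : V) : τ := (D.exists_bag v).choose

lemma nodeOf_mem (v : V) : v ∈ D.bag (D.nodeOf v) := (D.exists_bag v).choose_spec

/-- Connected components of the tree with node `t` removed. -/
def PeriphComp (t : τ) := (D.tree.induce {x : τ | x ≠ t}).ConnectedComponent

/-- Vertices of the torso at `t`: core vertices and peripheral vertices. -/
def TorsoV (t : τ) := {v : V // v ∈ D.bag t} ⊕ D.PeriphComp t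

/-- The consolidation map onto the torso at `t`. -/
noncomputable def torsoProj (t : τ) (v : V) : D.TorsoV t :=
  if h : v ∈ D.bag t then Sum.inl ⟨v, h⟩
  else Sum.inr ((D.tree.induce {x : τ | x ≠ t}).connectedComponentMk
    ⟨D.nodeOf v, fun he => h (he ▸ D.nodeOf_mem v)⟩)

/-- Edges of the torso at `t`: all edges except the loops created by consolidation. -/
def TorsoE (t : τ) :=
  {e : E // ∀ c : D.PeriphComp t,
    ¬ (D.torsoProj t (G.src e) = Sum.inr c ∧ D.torsoProj t (G.tgt e) = Sum.inr c)}

/-- The torso of the tree-cut decomposition at `t`. -/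
noncomputable def torso (t : τ) : Multigraph (D.TorsoV t) (D.TorsoE t) :=
  ⟨fun e => D.torsoProj t (G.src e.1), fun e => D.torsoProj t (G.tgt e.1)⟩

end TreeCutDecomp

/-- A witness that `G` is a `k`-edge sum of `G₁` and `G₂`. -/
structure EdgeSumWitness (G : Multigraph V E) {V₁ E₁ V₂ E₂ : Type*}
    (G₁ : Multigraph V₁ E₁) (G₂ : Multigraph V₂ E₂) (k : ℕ) where
  v₁ : V₁
  v₂ : V₂
  noloop₁ : ∀ e, ¬ (G₁.src e = v₁ ∧ G₁.tgt e = v₁)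
  noloop₂ : ∀ e, ¬ (G₂.src e = v₂ ∧ G₂.tgt e = v₂)
  deg₁ : G₁.degree v₁ = k
  deg₂ : G₂.degree v₂ = k
  π : {e : E₁ // G₁.Inc e v₁} ≃ {e : E₂ // G₂.Inc e v₂}
  φ : V ≃ ({x : V₁ // x ≠ v₁} ⊕ {x : V₂ // x ≠ v₂})
  ψ : E ≃ ({e : E₁ // ¬ G₁.Inc e v₁} ⊕ {e : E₂ // ¬ G₂.Inc e v₂} ⊕ {e : E₁ // G₁.Inc e v₁})
  ends₁ : ∀ (e : E) (e₁ : {e : E₁ // ¬ G₁.Inc e v₁}), ψ e = Sum.inl e₁ →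
    s(G.src e, G.tgt e) =
      s(φ.symm (Sum.inl ⟨G₁.src e₁.1, fun h => e₁.2 (Or.inl h)⟩),
        φ.symm (Sum.inl ⟨G₁.tgt e₁.1, fun h => e₁.2 (Or.inr h)⟩))
  ends₂ : ∀ (e : E) (e₂ : {e : E₂ // ¬ G₂.Inc e v₂}), ψ e = Sum.inr (Sum.inl e₂) →
    s(G.src e, G.tgt e) =
      s(φ.symm (Sum.inr ⟨G₂.src e₂.1, fun h => e₂.2 (Or.inl h)⟩),
        φ.symm (Sum.inr ⟨G₂.tgt e₂.1, fun h => e₂.2 (Or.inr h)⟩))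
  ends_cross : ∀ (e : E) (e₁ : {e : E₁ // G₁.Inc e v₁}), ψ e = Sum.inr (Sum.inr e₁) →
    s(G.src e, G.tgt e) =
      s(φ.symm (Sum.inl ⟨G₁.otherEnd v₁ e₁.1, G₁.otherEnd_ne e₁.2 (noloop₁ e₁.1)⟩),
        φ.symm (Sum.inr ⟨G₂.otherEnd v₂ (π e₁).1, G₂.otherEnd_ne (π e₁).2 (noloop₂ (π e₁).1)⟩))

/-- `G` is a `k`-edge sum of `G₁` and `G₂`. -/
def IsEdgeSum (G : Multigraph V E) {V₁ E₁ V₂ E₂ : Type*}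
    (G₁ : Multigraph V₁ E₁) (G₂ : Multigraph V₂ E₂) (k : ℕ) : Prop :=
  Nonempty (EdgeSumWitness G G₁ G₂ k)

/-- A witness of an edge sum is grounded. -/
def EdgeSumWitness.Grounded {V₁ E₁ V₂ E₂ : Type*} {G : Multigraph V E}
    {G₁ : Multigraph V₁ E₁} {G₂ : Multigraph V₂ E₂} {k : ℕ}
    (wit : EdgeSumWitness G G₁ G₂ k) : Prop :=
  (∃ v₁' : V₁, v₁' ≠ wit.v₁ ∧ G₁.EDWalks wit.v₁ v₁' k) ∧
  (∃ v₂' : V₂, v₂' ≠ wit.v₂ ∧ G₂.EDWalks wit.v₂ v₂' k)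

/-- The graph obtained from `G` by consolidating the set `S` to a single vertex. -/
noncomputable def consolidate (G : Multigraph V E) (S : Set V) :
    Multigraph ({v : V // v ∉ S} ⊕ Unit) {e : E // ¬ (G.src e ∈ S ∧ G.tgt e ∈ S)} where
  src := fun e => if h : G.src e.1 ∈ S then Sum.inr () else Sum.inl ⟨G.src e.1, h⟩
  tgt := fun e => if h : G.tgt e.1 ∈ S then Sum.inr () else Sum.inl ⟨G.tgt e.1, h⟩

/-- The auxiliary adjacency: `m` pairwise edge-disjoint `x`–`y` paths avoiding `W ∖ {x,y}`. -/
def auxAdj (G : Multigraph V E) (W : Set V) (m : ℕ) (x y : V) : Prop :=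
  x ∈ W ∧ y ∈ W ∧ ∃ P : Fin m → G.Walk x y, (∀ i, (P i).edges.Nodup) ∧
    (∀ i j, i ≠ j → ∀ e ∈ (P i).edges, e ∉ (P j).edges) ∧
    (∀ i, ∀ v ∈ (P i).support, v ∈ W → v = x ∨ v = y)

/-- The auxiliary simple graph `G(m, W)`. -/
def auxGraph (G : Multigraph V E) (W : Set V) (m : ℕ) : SimpleGraph V where
  Adj x y := x ≠ y ∧ (G.auxAdj W m x y ∨ G.auxAdj W m y x)
  symm := ⟨fun x y h => ⟨h.1.symm, h.2.symm⟩⟩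
  loopless := ⟨fun x h => h.1 rfl⟩

end Multigraph

/-- `H` contains `K_{1,k}` as a minor: a centre branch set joined to `k` pairwise
disjoint branch sets, all inducing connected subgraphs. -/
def SimpleGraph.HasStarMinor {V : Type*} (H : SimpleGraph V) (k : ℕ) : Prop :=
  ∃ C : Fin (k + 1) → Set V, (∀ i, (C i).Nonempty) ∧
    (∀ i, (H.induce (C i)).Connected) ∧
    (∀ i j, i ≠ j → Disjoint (C i) (C j)) ∧
    (∀ i, i ≠ 0 → ∃ u ∈ C 0, ∃ v ∈ C i, H.Adj u v)

section WalkLemmas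

namespace Multigraph

variable {V E : Type*} {G : Multigraph V E}

/-- Append two walks. -/
def Walk.append : ∀ {u v w : V}, G.Walk u v → G.Walk v w → G.Walk u w
  | _, _, _, .nil _, q => q
  | _, _, _, .cons e hs ht p, q => .cons e hs ht (p.append q)
  | _, _, _, .cons' e hs ht p, q => .cons' e hs ht (p.append q)

@[simp] lemma Walk.edges_append {u v w : V} (p : G.Walk u v) (q : G.Walk v w) :
    (p.append q).edges = p.edges ++ q.edges := by
  induction p with
  | nil => rfl
  | cons e hs ht p ih => simp [Walk.append, Walk.edges, ih]
  | cons' e hs ht p ih => simp [Walk.append, Walk.edges, ih]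

lemma Walk.support_append {u v w : V} (p : G.Walk u v) (q : G.Walk v w) :
    (p.append q).support = p.support ++ q.support.tail := by
  induction p with
  | nil v' =>
    cases q with
    | nil => rfl
    | cons e hs ht p => rfl
    | cons' e hs ht p => rfl
  | cons e hs ht p ih => simp [Walk.append, Walk.support, ih]
  | cons' e hs ht p ih => simp [Walk.append, Walk.support, ih]

@[simp] lemma Walk.start_mem_support {u v : V} (p : G.Walk u v) : u ∈ p.support := by
  cases p <;> simp [Walk.support]

@[simp] lemma Walk.end_mem_support {u v : V} (p : G.Walk u v) : v ∈ p.support := by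
  induction p with
  | nil => simp [Walk.support]
  | cons e hs ht p ih => simp [Walk.support, ih]
  | cons' e hs ht p ih => simp [Walk.support, ih]

lemma Walk.mem_support_append {u v w x : V} (p : G.Walk u v) (q : G.Walk v w)
    (hx : x ∈ (p.append q).support) : x ∈ p.support ∨ x ∈ q.support := by
  rw [Walk.support_append] at hx
  rcases List.mem_append.mp hx with h | h
  · exact Or.inl h
  · exact Or.inr (List.mem_of_mem_tail h)

/-- Reverse of a walk. -/
def Walk.reverse : ∀ {u v : V}, G.Walk u v → G.Walk v u
  | _, _, .nil v => .nil v
  | _, _, .cons e hs ht p => p.reverse.append (.cons' e hs ht (.nil _))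
  | _, _, .cons' e hs ht p => p.reverse.append (.cons e hs ht (.nil _))

@[simp] lemma Walk.edges_reverse {u v : V} (p : G.Walk u v) :
    p.reverse.edges = p.edges.reverse := by
  induction p with
  | nil => rfl
  | cons e hs ht p ih => simp [Walk.reverse, Walk.edges, ih]
  | cons' e hs ht p ih => simp [Walk.reverse, Walk.edges, ih]

@[simp] lemma Walk.support_reverse {u v : V} (p : G.Walk u v) :
    p.reverse.support = p.support.reverse := by
  induction p with
  | nil => rfl
  | cons e hs ht p ih => simp [Walk.reverse, Walk.support, Walk.support_append, ih]
  | cons' e hs ht p ih => simp [Walk.reverse, Walk.support, Walk.support_append, ih]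

lemma Walk.src_mem_support_of_mem_edges {u v : V} (p : G.Walk u v) {e : E}
    (he : e ∈ p.edges) : G.src e ∈ p.support ∧ G.tgt e ∈ p.support := by
  induction p with
  | nil => simp [Walk.edges] at he
  | cons e' hs ht p ih =>
    simp only [Walk.edges, List.mem_cons] at he
    rcases he with rfl | he
    · exact ⟨by simp [Walk.support, hs], by
        simp only [Walk.support, List.mem_cons]
        exact Or.inr (ht ▸ p.start_mem_support)⟩
    · exact ⟨List.mem_cons_of_mem _ (ih he).1, List.mem_cons_of_mem _ (ih he).2⟩
  | cons' e' hs ht p ih =>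
    simp only [Walk.edges, List.mem_cons] at he
    rcases he with rfl | he
    · exact ⟨by
        simp only [Walk.support, List.mem_cons]
        exact Or.inr (hs ▸ p.start_mem_support), by simp [Walk.support, ht]⟩
    · exact ⟨List.mem_cons_of_mem _ (ih he).1, List.mem_cons_of_mem _ (ih he).2⟩

/-- A walk from inside `S` to outside `S` contains a crossing edge. -/
lemma Walk.exists_cross_edge {u v : V} (p : G.Walk u v) (S : Set V)
    (hu : u ∈ S) (hv : v ∉ S) :
    ∃ e ∈ p.edges, (G.src e ∈ S ∧ G.tgt e ∉ S) ∨ (G.tgt e ∈ S ∧ G.src e ∉ S) := by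
  induction p with
  | nil => exact absurd hu hv
  | cons e hs ht p ih =>
    by_cases hmid : _root_.id (G.tgt e) ∈ S
    · obtain ⟨e', he', hcr⟩ := ih (ht ▸ hmid) hv
      exact ⟨e', List.mem_cons_of_mem _ he', hcr⟩
    · exact ⟨e, List.mem_cons_self, Or.inl ⟨hs ▸ hu, hmid⟩⟩
  | cons' e hs ht p ih =>
    by_cases hmid : _root_.id (G.src e) ∈ S
    · obtain ⟨e', he', hcr⟩ := ih (hs ▸ hmid) hv
      exact ⟨e', List.mem_cons_of_mem _ he', hcr⟩
    · exact ⟨e, List.mem_cons_self, Or.inr ⟨ht ▸ hu, hmid⟩⟩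

end Multigraph

end WalkLemmas
section MoreHelpers

namespace Multigraph

variable {V E : Type*} {G : Multigraph V E}

lemma walk_cast_edges {u u' c : V} (h : u = u') (w : G.Walk u c) :
    (h ▸ w : G.Walk u' c).edges = w.edges := by cases h; rfl

lemma walk_cast_support {u u' c : V} (h : u = u') (w : G.Walk u c) :
    (h ▸ w : G.Walk u' c).support = w.support := by cases h; rfl

end Multigraph

lemma nodup_filterMap' {α β : Type*} (f : α → Option β) :
    ∀ {l : List α}, l.Nodup →
    (∀ a ∈ l, ∀ a' ∈ l, ∀ b, f a = some b → f a' = some b → a = a') →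
    (l.filterMap f).Nodup := by
  intro l
  induction l with
  | nil => intro _ _; simp
  | cons a l ih =>
    intro hnd hinj
    rw [List.nodup_cons] at hnd
    rw [List.filterMap_cons]
    cases hfa : f a with
    | none => exact ih hnd.2 (fun x hx x' hx' b h1 h2 =>
        hinj x (List.mem_cons_of_mem _ hx) x' (List.mem_cons_of_mem _ hx') b h1 h2)
    | some b =>
      rw [List.nodup_cons]
      refine ⟨?_, ih hnd.2 (fun x hx x' hx' b' h1 h2 =>
        hinj x (List.mem_cons_of_mem _ hx) x' (List.mem_cons_of_mem _ hx') b' h1 h2)⟩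
      intro hb
      obtain ⟨a', ha', hfa'⟩ := List.mem_filterMap.mp hb
      have : a = a' := hinj a (List.mem_cons_self) a' (List.mem_cons_of_mem _ ha') b hfa hfa'
      exact hnd.1 (this ▸ ha')

end MoreHelpers
section SGLemmas

variable {α : Type*} {Γ : SimpleGraph α}

/-- An internal vertex of a simple-graph path has two distinct neighbours. -/
lemma internal_two_nbrs {u v w : α} (p : Γ.Walk u v) (hp : p.IsPath)
    (hw : w ∈ p.support) (hwu : w ≠ u) (hwv : w ≠ v) :
    ∃ a b, a ≠ b ∧ Γ.Adj w a ∧ Γ.Adj w b := by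
  induction p with
  | nil => simp at hw; exact absurd hw hwu
  | @cons x y z hadj p ih =>
    rw [SimpleGraph.Walk.support_cons] at hw
    rcases List.mem_cons.mp hw with rfl | hw'
    · exact absurd rfl hwu
    by_cases hwy : w = y
    · subst hwy
      cases p with
      | nil => exact absurd rfl hwv
      | @cons _ y2 _ hadj2 p2 =>
        refine ⟨x, y2, ?_, hadj.symm, hadj2⟩
        intro hxy2
        have hnd := hp.support_nodup
        rw [SimpleGraph.Walk.support_cons] at hnd
        have hx : x ∉ (SimpleGraph.Walk.cons hadj2 p2).support := (List.nodup_cons.mp hnd).1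
        rw [SimpleGraph.Walk.support_cons] at hx
        exact hx (List.mem_cons_of_mem _ (hxy2 ▸ p2.start_mem_support))
    · exact ih hp.of_cons hw' hwy hwv

/-- A simple-graph walk from inside `S` to outside `S` has a crossing adjacent pair
on its support. -/
lemma sg_exists_cross {u v : α} (p : Γ.Walk u v) (S : Set α) (hu : u ∈ S) (hv : v ∉ S) :
    ∃ x y, Γ.Adj x y ∧ x ∈ S ∧ y ∉ S ∧ x ∈ p.support ∧ y ∈ p.support := by
  induction p with
  | nil => exact absurd hu hv
  | @cons x y z hadj p ih =>
    by_cases hy : y ∈ S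
    · obtain ⟨a, b, h1, h2, h3, h4, h5⟩ := ih hy hv
      exact ⟨a, b, h1, h2, h3, by simp [h4], by simp [h5]⟩
    · exact ⟨x, y, hadj, hu, hy, by simp, by simp⟩

end SGLemmas
section DFlow

namespace DFlow

variable {A VD : Type*} [Fintype A] [Fintype VD] [DecidableEq A] [DecidableEq VD] (tl hd : A → VD)

/-- Contribution of one arc with usage value `b` to the divergence at `v`. -/
noncomputable def contribB (b : Bool) (a : A) (v : VD) : ℤ :=
  if b then (if tl a = v then 1 else 0) - (if hd a = v then 1 else 0) else 0

/-- Divergence (net outflow) of a 0/1-flow at a vertex. -/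
noncomputable def fdiv (f : A → Bool) (v : VD) : ℤ :=
  ∑ a : A, contribB tl hd (f a) a v

/-- Conservation away from `s` and `t`. -/
def Conserv (f : A → Bool) (s t : VD) : Prop :=
  ∀ v, v ≠ s → v ≠ t → fdiv tl hd f v = 0

@[simp] lemma contribB_false (a : A) (v : VD) : contribB tl hd false a v = 0 := rfl

lemma fdiv_const_false (v : VD) : fdiv tl hd (fun _ => false) v = 0 := by
  simp [fdiv]

lemma fdiv_update (f : A → Bool) (a : A) (b : Bool) (v : VD) :
    fdiv tl hd (Function.update f a b) v
      = fdiv tl hd f v - contribB tl hd (f a) a v + contribB tl hd b a v := by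
  have e1 := Finset.add_sum_erase Finset.univ
    (fun x => contribB tl hd ((Function.update f a b) x) x v) (Finset.mem_univ a)
  have e2 := Finset.add_sum_erase Finset.univ
    (fun x => contribB tl hd (f x) x v) (Finset.mem_univ a)
  have e3 : ∑ x ∈ Finset.univ.erase a, contribB tl hd ((Function.update f a b) x) x v
      = ∑ x ∈ Finset.univ.erase a, contribB tl hd (f x) x v := by
    refine Finset.sum_congr rfl fun x hx => ?_
    rw [Function.update_of_ne (Finset.ne_of_mem_erase hx)]
  simp only [Function.update_self] at e1
  unfold fdiv
  rw [← e1, ← e2, e3]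
  ring

/-- Augmenting sequences: traverse unused arcs forwards, used arcs backwards. -/
inductive Aug (f : A → Bool) : VD → VD → List (A × Bool) → Prop
  | nil (v) : Aug f v v []
  | consF {w : VD} (a : A) {l : List (A × Bool)} (hf : f a = false)
      (h : Aug f (hd a) w l) : Aug f (tl a) w ((a, false) :: l)
  | consB {w : VD} (a : A) {l : List (A × Bool)} (hf : f a = true)
      (h : Aug f (tl a) w l) : Aug f (hd a) w ((a, true) :: l)

/-- Flip the flow along an augmenting sequence. -/
noncomputable def flipAlong (l : List (A × Bool)) (f : A → Bool) : A → Bool :=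
  fun a => if a ∈ l.map Prod.fst then !(f a) else f a

lemma flipAlong_nil (f : A → Bool) : flipAlong ([] : List (A × Bool)) f = f := by
  funext a; simp [flipAlong]

lemma flipAlong_cons (f : A → Bool) (a : A) (b : Bool) (l : List (A × Bool))
    (ha : a ∉ l.map Prod.fst) :
    flipAlong ((a, b) :: l) f = Function.update (flipAlong l f) a (!(f a)) := by
  funext x
  by_cases hx : x = a
  · subst hx
    simp [flipAlong, Function.update_self, ha]
  · simp [flipAlong, Function.update_of_ne hx, hx]

lemma flipAlong_notmem (f : A → Bool) (l : List (A × Bool)) (a : A)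
    (ha : a ∉ l.map Prod.fst) : flipAlong l f a = f a := by
  simp [flipAlong, ha]

lemma fdiv_flip {f : A → Bool} {u v : VD} {l : List (A × Bool)}
    (haug : Aug tl hd f u v l) (hnd : (l.map Prod.fst).Nodup) (x : VD) :
    fdiv tl hd (flipAlong l f) x
      = fdiv tl hd f x + (if u = x then 1 else 0) - (if v = x then 1 else 0) := by
  induction haug with
  | nil w => rw [flipAlong_nil]; ring
  | @consF w a l hf h ih =>
    simp only [List.map_cons, List.nodup_cons] at hnd
    rw [flipAlong_cons f a _ l hnd.1, fdiv_update,
      flipAlong_notmem f l a hnd.1, ih hnd.2, hf]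
    simp only [contribB, Bool.not_false, if_true, if_false]
    split_ifs
    all_goals try ring
    all_goals exfalso
    all_goals first | assumption | exact Bool.false_ne_true (by assumption)
  | @consB w a l hf h ih =>
    simp only [List.map_cons, List.nodup_cons] at hnd
    rw [flipAlong_cons f a _ l hnd.1, fdiv_update,
      flipAlong_notmem f l a hnd.1, ih hnd.2, hf]
    simp only [contribB, Bool.not_true, if_true, if_false]
    split_ifs
    all_goals try ring
    all_goals exfalso
    all_goals first | assumption | exact Bool.false_ne_true (by assumption)

lemma Aug.append {f : A → Bool} {u v w : VD} {l l' : List (A × Bool)}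
    (h1 : Aug tl hd f u v l) (h2 : Aug tl hd f v w l') : Aug tl hd f u w (l ++ l') := by
  induction h1 with
  | nil => simpa using h2
  | consF a hf h ih => exact Aug.consF a hf (ih h2)
  | consB a hf h ih => exact Aug.consB a hf (ih h2)

lemma Aug.entries {f : A → Bool} {u v : VD} {l : List (A × Bool)}
    (h : Aug tl hd f u v l) : ∀ p ∈ l, f p.1 = p.2 := by
  induction h with
  | nil => simp
  | consF a hf h ih =>
    intro p hp
    rcases List.mem_cons.mp hp with rfl | hp
    · exact hf
    · exact ih p hp
  | consB a hf h ih =>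
    intro p hp
    rcases List.mem_cons.mp hp with rfl | hp
    · exact hf
    · exact ih p hp

lemma Aug.suffix {f : A → Bool} {u v : VD} {l : List (A × Bool)}
    (h : Aug tl hd f u v l) (a : A) (b : Bool) (hab : (a, b) ∈ l) :
    ∃ l₁ l₂, l = l₁ ++ (a, b) :: l₂ ∧ Aug tl hd f (if b then tl a else hd a) v l₂ := by
  induction h with
  | nil => simp at hab
  | @consF w a' l' hf h ih =>
    rcases List.mem_cons.mp hab with heq | hmem
    · obtain ⟨rfl, rfl⟩ : a = a' ∧ b = false := by
        constructor <;> [exact congrArg Prod.fst heq; exact congrArg Prod.snd heq]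
      exact ⟨[], l', by simp, by simpa using h⟩
    · obtain ⟨l₁, l₂, rfl, h2⟩ := ih hmem
      exact ⟨(a', false) :: l₁, l₂, by simp, h2⟩
  | @consB w a' l' hf h ih =>
    rcases List.mem_cons.mp hab with heq | hmem
    · obtain ⟨rfl, rfl⟩ : a = a' ∧ b = true := by
        constructor <;> [exact congrArg Prod.fst heq; exact congrArg Prod.snd heq]
      exact ⟨[], l', by simp, by simpa using h⟩
    · obtain ⟨l₁, l₂, rfl, h2⟩ := ih hmem
      exact ⟨(a', true) :: l₁, l₂, by simp, h2⟩

lemma Aug.dedup {f : A → Bool} {u v : VD} {l : List (A × Bool)}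
    (h : Aug tl hd f u v l) :
    ∃ l', Aug tl hd f u v l' ∧ (l'.map Prod.fst).Nodup := by
  induction h with
  | nil w => exact ⟨[], Aug.nil w, by simp⟩
  | @consF w a l' hf h ih =>
    obtain ⟨l'', h'', nd''⟩ := ih
    by_cases ha : a ∈ l''.map Prod.fst
    · obtain ⟨p, hp, hpa⟩ := List.mem_map.mp ha
      obtain ⟨a0, b0⟩ := p
      replace hp : (a, b0) ∈ l'' := by rw [show a = a0 from (hpa : a0 = a).symm]; exact hp
      have hb0 : b0 = false := by
        have := h''.entries _ _ _ hp
        simp only at this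
        rw [hf] at this; exact this.symm
      subst hb0
      obtain ⟨l₁, l₂, rfl, h2⟩ := h''.suffix _ _ a false hp
      simp only [if_neg Bool.false_ne_true, Bool.false_eq_true, if_false] at h2
      have hnd2 : (a :: l₂.map Prod.fst).Nodup := by
        have : (l₁ ++ (a, false) :: l₂).map Prod.fst
            = l₁.map Prod.fst ++ a :: l₂.map Prod.fst := by simp
        rw [this] at nd''
        exact nd''.of_append_right
      exact ⟨(a, false) :: l₂, Aug.consF a hf h2, by simpa using hnd2⟩
    · exact ⟨(a, false) :: l'', Aug.consF a hf h'', by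
        simp only [List.map_cons, List.nodup_cons]; exact ⟨ha, nd''⟩⟩
  | @consB w a l' hf h ih =>
    obtain ⟨l'', h'', nd''⟩ := ih
    by_cases ha : a ∈ l''.map Prod.fst
    · obtain ⟨p, hp, hpa⟩ := List.mem_map.mp ha
      obtain ⟨a0, b0⟩ := p
      replace hp : (a, b0) ∈ l'' := by rw [show a = a0 from (hpa : a0 = a).symm]; exact hp
      have hb0 : b0 = true := by
        have := h''.entries _ _ _ hp
        simp only at this
        rw [hf] at this; exact this.symm
      subst hb0
      obtain ⟨l₁, l₂, rfl, h2⟩ := h''.suffix _ _ a true hp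
      simp only [if_pos rfl, if_true] at h2
      have hnd2 : (a :: l₂.map Prod.fst).Nodup := by
        have : (l₁ ++ (a, true) :: l₂).map Prod.fst
            = l₁.map Prod.fst ++ a :: l₂.map Prod.fst := by simp
        rw [this] at nd''
        exact nd''.of_append_right
      exact ⟨(a, true) :: l₂, Aug.consB a hf h2, by simpa using hnd2⟩
    · exact ⟨(a, true) :: l'', Aug.consB a hf h'', by
        simp only [List.map_cons, List.nodup_cons]; exact ⟨ha, nd''⟩⟩

/-- Residual reachability. -/
def Reach (f : A → Bool) (u v : VD) : Prop := ∃ l, Aug tl hd f u v l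

lemma Reach.refl (f : A → Bool) (u : VD) : Reach tl hd f u u := ⟨[], Aug.nil u⟩

lemma Reach.snocF {f : A → Bool} {s : VD} {a : A} (h : Reach tl hd f s (tl a))
    (hf : f a = false) : Reach tl hd f s (hd a) := by
  obtain ⟨l, hl⟩ := h
  exact ⟨l ++ [(a, false)], hl.append _ _ (Aug.consF a hf (Aug.nil _))⟩

lemma Reach.snocB {f : A → Bool} {s : VD} {a : A} (h : Reach tl hd f s (hd a))
    (hf : f a = true) : Reach tl hd f s (tl a) := by
  obtain ⟨l, hl⟩ := h
  exact ⟨l ++ [(a, true)], hl.append _ _ (Aug.consB a hf (Aug.nil _))⟩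

lemma fdiv_sum (f : A → Bool) (R : Finset VD) :
    ∑ v ∈ R, fdiv tl hd f v
      = ((Finset.univ.filter (fun a => f a = true ∧ tl a ∈ R ∧ hd a ∉ R)).card : ℤ)
        - ((Finset.univ.filter (fun a => f a = true ∧ hd a ∈ R ∧ tl a ∉ R)).card : ℤ) := by
  unfold fdiv
  rw [Finset.sum_comm]
  have hinner : ∀ a : A, ∑ v ∈ R, contribB tl hd (f a) a v
      = (if f a = true ∧ tl a ∈ R ∧ hd a ∉ R then (1:ℤ) else 0)
        - (if f a = true ∧ hd a ∈ R ∧ tl a ∉ R then (1:ℤ) else 0) := by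
    intro a
    cases hfa : f a with
    | false => simp [contribB]
    | true =>
      simp only [contribB, if_true, true_and]
      rw [Finset.sum_sub_distrib, Finset.sum_ite_eq R (tl a) (fun _ => (1:ℤ)),
        Finset.sum_ite_eq R (hd a) (fun _ => (1:ℤ))]
      split_ifs <;> simp_all <;> ring
  calc ∑ a : A, ∑ v ∈ R, contribB tl hd (f a) a v
      = ∑ a : A, ((if f a = true ∧ tl a ∈ R ∧ hd a ∉ R then (1:ℤ) else 0)
        - (if f a = true ∧ hd a ∈ R ∧ tl a ∉ R then (1:ℤ) else 0)) :=
        Finset.sum_congr rfl fun a _ => hinner a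
    _ = _ := by
        rw [Finset.sum_sub_distrib, Finset.sum_boole, Finset.sum_boole]

theorem maxflow (s t : VD) (hst : s ≠ t) (k : ℕ)
    (hcut : ∀ S : Finset VD, s ∈ S → t ∉ S →
      k ≤ (Finset.univ.filter (fun a => tl a ∈ S ∧ hd a ∉ S)).card) :
    ∃ f : A → Bool, Conserv tl hd f s t ∧ (k : ℤ) ≤ fdiv tl hd f s := by
  have hne : (Finset.univ.filter (fun f : A → Bool => Conserv tl hd f s t)).Nonempty := by
    refine ⟨fun _ => false, Finset.mem_filter.mpr ⟨Finset.mem_univ _, fun v _ _ => ?_⟩⟩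
    exact fdiv_const_false tl hd v
  obtain ⟨f, hfmem, hfmax⟩ := Finset.exists_max_image _ (fun f => fdiv tl hd f s) hne
  have hcons : Conserv tl hd f s t := (Finset.mem_filter.mp hfmem).2
  by_cases hre : Reach tl hd f s t
  · exfalso
    obtain ⟨l, hl⟩ := hre
    obtain ⟨l', hl', hnd'⟩ := hl.dedup _ _
    have hflip := fdiv_flip tl hd hl' hnd'
    have hcons' : Conserv tl hd (flipAlong l' f) s t := by
      intro v hv1 hv2
      rw [hflip v, hcons v hv1 hv2, if_neg (fun h => hv1 h.symm), if_neg (fun h => hv2 h.symm)]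
      ring
    have hmem' : flipAlong l' f ∈ Finset.univ.filter (fun g : A → Bool => Conserv tl hd g s t) := Finset.mem_filter.mpr ⟨Finset.mem_univ _, hcons'⟩
    have := hfmax _ hmem'
    rw [hflip s, if_pos rfl, if_neg (show ¬ t = s from fun h => hst h.symm)] at this
    linarith
  · refine ⟨f, hcons, ?_⟩
    set R := Finset.univ.filter (fun v => Reach tl hd f s v) with hR
    have hsR : s ∈ R := Finset.mem_filter.mpr ⟨Finset.mem_univ _, Reach.refl tl hd f s⟩
    have htR : t ∉ R := fun h => hre ((Finset.mem_filter.mp h).2)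
    have hsum := fdiv_sum tl hd f R
    have hX : Finset.univ.filter (fun a => f a = true ∧ tl a ∈ R ∧ hd a ∉ R)
        = Finset.univ.filter (fun a => tl a ∈ R ∧ hd a ∉ R) := by
      ext a
      simp only [Finset.mem_filter, Finset.mem_univ, true_and]
      refine ⟨fun h => h.2, fun h => ⟨?_, h⟩⟩
      by_contra hfa
      have hfa' : f a = false := by
        cases hfe : f a
        · rfl
        · exact absurd hfe hfa
      have : Reach tl hd f s (hd a) := ((Finset.mem_filter.mp h.1).2).snocF _ _ hfa'
      exact h.2 (Finset.mem_filter.mpr ⟨Finset.mem_univ _, this⟩)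
    have hY : Finset.univ.filter (fun a => f a = true ∧ hd a ∈ R ∧ tl a ∉ R) = ∅ := by
      ext a
      simp only [Finset.mem_filter, Finset.mem_univ, true_and, Finset.notMem_empty,
        iff_false]
      rintro ⟨hfa, hhd, htl⟩
      have : Reach tl hd f s (tl a) := ((Finset.mem_filter.mp hhd).2).snocB _ _ hfa
      exact htl (Finset.mem_filter.mpr ⟨Finset.mem_univ _, this⟩)
    have hsingle : ∑ v ∈ R, fdiv tl hd f v = fdiv tl hd f s := by
      refine Finset.sum_eq_single_of_mem s hsR fun v hv hne' => ?_
      exact hcons v hne' (fun h => htR (h ▸ hv))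
    rw [hsingle, hX, hY] at hsum
    simp only [Finset.card_empty, Nat.cast_zero, sub_zero] at hsum
    rw [hsum]
    exact_mod_cast hcut R hsR htR

end DFlow

end DFlow
section DWalkSec

namespace DFlow

variable {A VD : Type*} [Fintype A] [Fintype VD] [DecidableEq A] [DecidableEq VD] (tl hd : A → VD)

/-- Directed walks along arcs. -/
inductive DWalk (tl hd : A → VD) : VD → VD → Type _
  | nil (v : VD) : DWalk tl hd v v
  | cons {u v w : VD} (a : A) (h1 : tl a = u) (h2 : hd a = v) (p : DWalk tl hd v w) :
      DWalk tl hd u w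

namespace DWalk

def arcs {tl hd : A → VD} : ∀ {u v : VD}, DWalk tl hd u v → List A
  | _, _, .nil _ => []
  | _, _, .cons a _ _ p => a :: p.arcs

def append {tl hd : A → VD} : ∀ {u v w : VD}, DWalk tl hd u v → DWalk tl hd v w →
    DWalk tl hd u w
  | _, _, _, .nil _, q => q
  | _, _, _, .cons a h1 h2 p, q => .cons a h1 h2 (p.append q)

@[simp] lemma arcs_append {tl hd : A → VD} {u v w : VD} (p : DWalk tl hd u v)
    (q : DWalk tl hd v w) : (p.append q).arcs = p.arcs ++ q.arcs := by
  induction p with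
  | nil => rfl
  | cons a h1 h2 p ih => simp [append, arcs, ih]

/-- One-arc extension at the end. -/
def snoc {tl hd : A → VD} {u v : VD} (p : DWalk tl hd u v) (a : A) (h : tl a = v) :
    DWalk tl hd u (hd a) :=
  p.append (.cons a h rfl (.nil _))

@[simp] lemma arcs_snoc {tl hd : A → VD} {u v : VD} (p : DWalk tl hd u v) (a : A)
    (h : tl a = v) : (p.snoc a h).arcs = p.arcs ++ [a] := by
  simp [snoc, arcs]

lemma suffix_of_mem {tl hd : A → VD} : ∀ {u v : VD} (p : DWalk tl hd u v)
    (_ : p.arcs.Nodup) (a : A) (_ : a ∈ p.arcs),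
    ∃ q : DWalk tl hd (hd a) v, (∀ x ∈ q.arcs, x ∈ p.arcs) ∧ a ∉ q.arcs ∧ q.arcs.Nodup
  | _, _, .nil _, _, a, ha => by simp [arcs] at ha
  | _, _, .cons a' h1 h2 p, hnd, a, ha => by
    simp only [arcs, List.nodup_cons] at hnd
    rcases List.mem_cons.mp ha with rfl | hmem
    · subst h2
      exact ⟨p, fun x hx => List.mem_cons_of_mem _ hx, hnd.1, hnd.2⟩
    · obtain ⟨q, hq1, hq2, hq3⟩ := suffix_of_mem p hnd.2 a hmem
      exact ⟨q, fun x hx => List.mem_cons_of_mem _ (hq1 x hx), hq2, hq3⟩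

lemma dedup {tl hd : A → VD} : ∀ {u v : VD} (p : DWalk tl hd u v),
    ∃ q : DWalk tl hd u v, (∀ x ∈ q.arcs, x ∈ p.arcs) ∧ q.arcs.Nodup
  | _, _, .nil w => ⟨.nil w, by simp [arcs], by simp [arcs]⟩
  | _, _, .cons a h1 h2 p => by
    obtain ⟨q, hq1, hq2⟩ := dedup p
    by_cases ha : a ∈ q.arcs
    · obtain ⟨r, hr1, hr2, hr3⟩ := q.suffix_of_mem hq2 a ha
      refine ⟨.cons a h1 rfl r, fun x hx => ?_, ?_⟩
      · rcases List.mem_cons.mp hx with rfl | hx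
        · exact List.mem_cons_self
        · exact List.mem_cons_of_mem _ (hq1 _ (hr1 _ hx))
      · simp only [arcs, List.nodup_cons]
        exact ⟨hr2, hr3⟩
    · refine ⟨.cons a h1 h2 q, fun x hx => ?_, ?_⟩
      · rcases List.mem_cons.mp hx with rfl | hx
        · exact List.mem_cons_self
        · exact List.mem_cons_of_mem _ (hq1 _ hx)
      · simp only [arcs, List.nodup_cons]
        exact ⟨ha, hq2⟩

end DWalk

lemma dwalk_to_aug {tl hd : A → VD} (f : A → Bool) {u v : VD} (p : DWalk tl hd u v) :
    (∀ x ∈ p.arcs, f x = true) →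
    Aug tl hd f v u (p.arcs.reverse.map (fun a => (a, true))) := by
  induction p with
  | nil w => intro _; simpa [DWalk.arcs] using Aug.nil (f := f) w
  | @cons u' v' w' a h1 h2 p ih =>
    intro hused
    subst h1; subst h2
    have h' := ih (fun x hx => hused x (List.mem_cons_of_mem _ hx))
    have hfa : f a = true := hused a (List.mem_cons_self)
    have hsingle : Aug tl hd f (hd a) (tl a) [(a, true)] :=
      Aug.consB a hfa (Aug.nil (tl a))
    have := Aug.append tl hd h' hsingle
    simpa [DWalk.arcs] using this

theorem decomp (s t : VD) (k : ℕ) :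
    ∀ f : A → Bool, Conserv tl hd f s t → (k : ℤ) ≤ fdiv tl hd f s →
    ∃ L : List (DWalk tl hd s t), L.length = k ∧
      (∀ p ∈ L, p.arcs.Nodup ∧ ∀ a ∈ p.arcs, f a = true) ∧
      L.Pairwise (fun p q => ∀ a ∈ p.arcs, a ∉ q.arcs) := by
  induction k with
  | zero => intro f _ _; exact ⟨[], rfl, by simp, by simp⟩
  | succ k ih =>
    intro f hcons hk
    -- t is forward-reachable from s along used arcs
    have hreach : ∃ p : DWalk tl hd s t, ∀ a ∈ p.arcs, f a = true := by
      by_contra hnr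
      push_neg at hnr
      set R := Finset.univ.filter
        (fun v => ∃ p : DWalk tl hd s v, ∀ a ∈ p.arcs, f a = true) with hRdef
      have hsR : s ∈ R := Finset.mem_filter.mpr
        ⟨Finset.mem_univ _, ⟨.nil s, by simp [DWalk.arcs]⟩⟩
      have htR : t ∉ R := by
        intro h
        obtain ⟨p, hp⟩ := (Finset.mem_filter.mp h).2
        obtain ⟨a, ha, hfa⟩ := hnr p
        exact hfa (hp a ha)
      have hsum := fdiv_sum tl hd f R
      have hX : Finset.univ.filter (fun a => f a = true ∧ tl a ∈ R ∧ hd a ∉ R) = ∅ := by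
        ext a
        simp only [Finset.mem_filter, Finset.mem_univ, true_and, Finset.notMem_empty,
          iff_false]
        rintro ⟨hfa, htl, hhd⟩
        obtain ⟨p, hp⟩ := (Finset.mem_filter.mp htl).2
        refine hhd (Finset.mem_filter.mpr ⟨Finset.mem_univ _, ⟨p.snoc a rfl, ?_⟩⟩)
        intro x hx
        rw [DWalk.arcs_snoc] at hx
        rcases List.mem_append.mp hx with hx | hx
        · exact hp x hx
        · rw [List.mem_singleton.mp hx]; exact hfa
      have hsingle : ∑ v ∈ R, fdiv tl hd f v = fdiv tl hd f s := by
        refine Finset.sum_eq_single_of_mem s hsR fun v hv hne' => ?_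
        exact hcons v hne' (fun h => htR (h ▸ hv))
      rw [hsingle, hX] at hsum
      simp only [Finset.card_empty, Nat.cast_zero, zero_sub] at hsum
      have : (0:ℤ) ≤ (Finset.univ.filter
        (fun a => f a = true ∧ hd a ∈ R ∧ tl a ∉ R)).card := by positivity
      have hk1 : (1:ℤ) ≤ fdiv tl hd f s := le_trans (by exact_mod_cast Nat.one_le_iff_ne_zero.mpr (Nat.succ_ne_zero k)) hk
      linarith
    obtain ⟨p0, hp0⟩ := hreach
    obtain ⟨q, hq1, hq2⟩ := p0.dedup
    have hqused : ∀ a ∈ q.arcs, f a = true := fun a ha => hp0 a (hq1 a ha)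
    set f' : A → Bool := fun a => if a ∈ q.arcs then false else f a with hf'def
    have haug := dwalk_to_aug f q hqused
    have hnd : ((q.arcs.reverse.map (fun a => (a, true))).map Prod.fst).Nodup := by
      simp only [List.map_map]
      have hcomp : (Prod.fst ∘ fun a : A => (a, true)) = id := rfl
      rw [hcomp, List.map_id, List.nodup_reverse]
      exact hq2
    have hflipeq : flipAlong (q.arcs.reverse.map (fun a => (a, true))) f = f' := by
      funext a
      by_cases ha : a ∈ q.arcs
      · have hmem : a ∈ ((q.arcs.reverse.map (fun a => (a, true))).map Prod.fst) := by
          simp only [List.map_map]; simpa using ha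
        simp only [flipAlong, if_pos hmem, hf'def, if_pos ha, hqused a ha, Bool.not_true]
      · have hmem : a ∉ ((q.arcs.reverse.map (fun a => (a, true))).map Prod.fst) := by
          simp only [List.map_map]; simpa using ha
        simp only [flipAlong, if_neg hmem, hf'def, if_neg ha]
    have hflip := fdiv_flip tl hd haug hnd
    rw [hflipeq] at hflip
    have hcons' : Conserv tl hd f' s t := by
      intro v hv1 hv2
      rw [hflip v, hcons v hv1 hv2, if_neg (fun h => hv2 h.symm), if_neg (fun h => hv1 h.symm)]
      ring
    have hk' : (k : ℤ) ≤ fdiv tl hd f' s := by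
      have := hflip s
      rw [this]
      push_cast at hk ⊢
      split_ifs <;> linarith
    obtain ⟨L', hL'len, hL'prop, hL'pair⟩ := ih f' hcons' hk'
    have hL'f : ∀ p ∈ L', ∀ a ∈ DWalk.arcs p, f a = true ∧ a ∉ q.arcs := by
      intro p hp a ha
      have := (hL'prop p hp).2 a ha
      rw [hf'def] at this
      by_cases haq : a ∈ q.arcs
      · simp [haq] at this
      · simp [haq] at this
        exact ⟨this, haq⟩
    refine ⟨q :: L', by simp [hL'len], ?_, ?_⟩
    · intro p hp
      rcases List.mem_cons.mp hp with rfl | hp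
      · exact ⟨hq2, hqused⟩
      · exact ⟨(hL'prop p hp).1, fun a ha => (hL'f p hp a ha).1⟩
    · refine List.Pairwise.cons ?_ hL'pair
      intro p hp a haq hap
      exact (hL'f p hp a hap).2 haq

end DFlow

end DWalkSec
section Gadget

open Multigraph

variable {V E V' E' : Type*} (G : Multigraph V E) (Zs Za : Set V) (fkhead : E' × Bool → V)

/-- Allowed oriented real arcs of the auxiliary directed network. -/
def gadAllowed (p : E × Bool) : Prop :=
  (if p.2 then G.tgt p.1 else G.src p.1) ∉ Zs ∧
  ((if p.2 then G.src p.1 else G.tgt p.1) ∉ Zs ∨ (if p.2 then G.src p.1 else G.tgt p.1) ∈ Za)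

/-- Arcs: allowed oriented real edges, plus fake source arcs. -/
abbrev GadArc {V E : Type*} (G : Multigraph V E) (Zs Za : Set V) (E' : Type*) : Type _ :=
  {p : E × Bool // gadAllowed G Zs Za p} ⊕ (E' × Bool)

def gadTl {V E : Type*} (G : Multigraph V E) (Zs Za : Set V) (E' : Type*) :
    GadArc G Zs Za E' → V ⊕ Unit := fun a =>
  match a with
  | .inl r => .inl (if r.1.2 then G.src r.1.1 else G.tgt r.1.1)
  | .inr _ => .inr ()

def gadHd {V E E' : Type*} (G : Multigraph V E) (Zs Za : Set V) (fkhead : E' × Bool → V) :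
    GadArc G Zs Za E' → V ⊕ Unit := fun a =>
  match a with
  | .inl r => .inl (if r.1.2 then G.tgt r.1.1 else G.src r.1.1)
  | .inr p => .inl (fkhead p)

def gadE {V E : Type*} (G : Multigraph V E) (Zs Za : Set V) (E' : Type*) :
    GadArc G Zs Za E' → Option E := fun a =>
  match a with
  | .inl r => some r.1.1
  | .inr _ => none


section GadSimp
variable {V E E' : Type*} (G : Multigraph V E) (Zs Za : Set V) (fkhead : E' × Bool → V)

@[simp] lemma gadTl_inl_true (e : E) (h : gadAllowed G Zs Za (e, true)) :
    gadTl G Zs Za E' (Sum.inl ⟨(e, true), h⟩) = Sum.inl (G.src e) := rfl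
@[simp] lemma gadTl_inl_false (e : E) (h : gadAllowed G Zs Za (e, false)) :
    gadTl G Zs Za E' (Sum.inl ⟨(e, false), h⟩) = Sum.inl (G.tgt e) := rfl
@[simp] lemma gadTl_inr (p : E' × Bool) :
    gadTl G Zs Za E' (Sum.inr p) = Sum.inr () := rfl
@[simp] lemma gadHd_inl_true (e : E) (h : gadAllowed G Zs Za (e, true)) :
    gadHd G Zs Za fkhead (Sum.inl ⟨(e, true), h⟩) = Sum.inl (G.tgt e) := rfl
@[simp] lemma gadHd_inl_false (e : E) (h : gadAllowed G Zs Za (e, false)) :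
    gadHd G Zs Za fkhead (Sum.inl ⟨(e, false), h⟩) = Sum.inl (G.src e) := rfl
@[simp] lemma gadHd_inr (p : E' × Bool) :
    gadHd G Zs Za fkhead (Sum.inr p) = Sum.inl (fkhead p) := rfl
@[simp] lemma gadE_inl (r : {p : E × Bool // gadAllowed G Zs Za p}) :
    gadE G Zs Za E' (Sum.inl r) = some r.1.1 := rfl
@[simp] lemma gadE_inr (p : E' × Bool) :
    gadE G Zs Za E' (Sum.inr p) = none := rfl

end GadSimp

/-- Convert a directed walk in the gadget starting and ending at real vertices into a
walk in `G`. -/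
lemma gad_conv
    (w w2 : V ⊕ Unit) (pp : DFlow.DWalk (gadTl G Zs Za E') (gadHd G Zs Za fkhead) w w2) :
    ∀ (x c : V), w = Sum.inl x → w2 = Sum.inl c →
    ∃ gw : G.Walk x c, gw.edges = pp.arcs.filterMap (gadE G Zs Za E') ∧
      (∀ a ∈ pp.arcs, ∃ r, a = Sum.inl r) ∧
      (∀ v ∈ gw.support, v = x ∨ v ∉ Zs) := by
  induction pp with
  | nil v =>
    intro x c hx hc
    obtain rfl : x = c := Sum.inl.inj (hx.symm.trans hc)
    refine ⟨.nil x, by simp [DFlow.DWalk.arcs, Multigraph.Walk.edges], by simp [DFlow.DWalk.arcs], ?_⟩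
    intro v hv
    left
    simpa [Multigraph.Walk.support] using hv
  | @cons u' v' w' a h1 h2 q ih =>
    intro x c hx hc
    cases a with
    | inr fk => exact absurd (h1.trans hx) (by simp [gadTl])
    | inl r =>
      obtain ⟨⟨e, b⟩, hall⟩ := r
      cases b with
      | true =>
        have hsrc : G.src e = x := by
          have := h1.trans hx
          simpa [gadTl] using this
        have hhd : v' = Sum.inl (G.tgt e) := by
          rw [← h2]; simp [gadHd]
        obtain ⟨gw', hedges, hreal, hsupp⟩ := ih (G.tgt e) c hhd hc
        have hnz : G.tgt e ∉ Zs := by simpa [gadAllowed] using hall.1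
        refine ⟨.cons e hsrc rfl gw', ?_, ?_, ?_⟩
        · simp only [Multigraph.Walk.edges, DFlow.DWalk.arcs, List.filterMap_cons, hedges]
          rfl
        · intro a ha
          simp only [DFlow.DWalk.arcs, List.mem_cons] at ha
          rcases ha with rfl | ha
          · exact ⟨_, rfl⟩
          · exact hreal a ha
        · intro v hv
          simp only [Multigraph.Walk.support, List.mem_cons] at hv
          rcases hv with rfl | hv
          · exact Or.inl rfl
          · rcases hsupp v hv with rfl | hvz
            · exact Or.inr hnz
            · exact Or.inr hvz
      | false =>
        have htgt : G.tgt e = x := by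
          have := h1.trans hx
          simpa [gadTl] using this
        have hhd : v' = Sum.inl (G.src e) := by
          rw [← h2]; simp [gadHd]
        obtain ⟨gw', hedges, hreal, hsupp⟩ := ih (G.src e) c hhd hc
        have hnz : G.src e ∉ Zs := by simpa [gadAllowed] using hall.1
        refine ⟨.cons' e rfl htgt gw', ?_, ?_, ?_⟩
        · simp only [Multigraph.Walk.edges, DFlow.DWalk.arcs, List.filterMap_cons, hedges]
          rfl
        · intro a ha
          simp only [DFlow.DWalk.arcs, List.mem_cons] at ha
          rcases ha with rfl | ha
          · exact ⟨_, rfl⟩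
          · exact hreal a ha
        · intro v hv
          simp only [Multigraph.Walk.support, List.mem_cons] at hv
          rcases hv with rfl | hv
          · exact Or.inl rfl
          · rcases hsupp v hv with rfl | hvz
            · exact Or.inr hnz
            · exact Or.inr hvz

/-- Structure of a gadget trail from the source to `inl c`: one fake arc, then a
real walk from the fake head to `c`. -/
lemma gad_trail (c : V)
    (pp : DFlow.DWalk (gadTl G Zs Za E') (gadHd G Zs Za fkhead) (Sum.inr ()) (Sum.inl c)) :
    ∃ (fk : E' × Bool) (gw : G.Walk (fkhead fk) c),
      (Sum.inr fk) ∈ pp.arcs ∧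
      gw.edges = pp.arcs.filterMap (gadE G Zs Za E') ∧
      (∀ a ∈ pp.arcs, a ≠ Sum.inr fk → ∃ r, a = Sum.inl r) ∧
      (∀ v ∈ gw.support, v = fkhead fk ∨ v ∉ Zs) := by
  cases pp with
  | cons a h1 h2 q =>
    cases a with
    | inl r => exact absurd h1 (by simp [gadTl])
    | inr fk =>
      have hhd : _ = Sum.inl (fkhead fk) := h2.symm.trans (by simp [gadHd])
      obtain ⟨gw, hedges, hreal, hsupp⟩ := gad_conv G Zs Za fkhead _ _ q (fkhead fk) c hhd rfl
      refine ⟨fk, gw, List.mem_cons_self, ?_, ?_, hsupp⟩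
      · simp only [DFlow.DWalk.arcs, List.filterMap_cons, hedges]
        rfl
      · intro a ha hane
        simp only [DFlow.DWalk.arcs, List.mem_cons] at ha
        rcases ha with rfl | ha
        · exact absurd rfl hane
        · exact hreal a ha

end Gadget
/-- if `G(m,W)` contains a subtree with a non-leaf hub `c` and exactly
`|V(F)|` leaves, where `|V(F)| ≥ 2` and `m ≥ 2|E(F)|`, then `G` strongly immerses `F`. -/
theorem strongImmersion_of_auxGraph_star {V E V' E' : Type*} [Fintype V] [Fintype E]
    [Fintype V'] [Fintype E']
    (G : Multigraph V E) (F : Multigraph V' E') (W : Set V) (m : ℕ)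
    (hVF : 2 ≤ Fintype.card V') (hm : 2 * Fintype.card E' ≤ m)
    (T : (G.auxGraph W m).Subgraph) (c : V) (htree : T.coe.IsTree)
    (hc : c ∈ T.verts) (hcdeg : 2 ≤ (T.neighborSet c).ncard)
    (hZ : {v | v ∈ T.verts ∧ (T.neighborSet v).ncard = 1}.ncard = Fintype.card V') :
    Multigraph.StrongImmersion F G := by
  classical
  set Zset : Set V := {v | v ∈ T.verts ∧ (T.neighborSet v).ncard = 1} with hZsetdef
  have hcZ : c ∉ Zset := by
    rintro ⟨-, h1⟩
    omega
  have hfin : Zset.Finite := Set.toFinite _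
  haveI : Fintype ↥Zset := hfin.fintype
  have hcard : Fintype.card ↥Zset = Fintype.card V' := by
    rw [← Nat.card_eq_fintype_card, Nat.card_coe_set_eq]
    exact hZ
  obtain ⟨θe⟩ : Nonempty (V' ≃ ↥Zset) := ⟨Fintype.equivOfCardEq hcard.symm⟩
  set θ : V' → V := fun u => (θe u : V) with hθdef
  have hθinj : Function.Injective θ := fun u u' h => θe.injective (Subtype.ext h)
  have hθZ : ∀ u, θ u ∈ Zset := fun u => (θe u).2
  have hadjW : ∀ {x y : V}, (G.auxGraph W m).Adj x y → x ∈ W ∧ y ∈ W := by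
    rintro x y ⟨-, h | h⟩
    · exact ⟨h.1, h.2.1⟩
    · exact ⟨h.2.1, h.1⟩
  have hZW : Zset ⊆ W := by
    rintro v ⟨hvT, hv1⟩
    have hne : (T.neighborSet v).Nonempty :=
      (Set.ncard_pos (Set.toFinite _)).mp (by omega)
    obtain ⟨y, hy⟩ := hne
    exact (hadjW (T.adj_sub hy)).1
  set endb : E' × Bool → V' := fun p =>
    match p.2 with
    | true => F.src p.1
    | false => F.tgt p.1
    with hendb
  set fkh : E' × Bool → V := fun pb => θ (endb pb) with hfkh
  set Za : Set V := Set.range fkh with hZadef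
  have hZaZ : Za ⊆ Zset := by
    rintro v ⟨p, rfl⟩
    exact hθZ _
  -- The crossing lemma
  have cross : ∀ (Sg : Set V) (z : V), z ∈ Za → z ∈ Sg → c ∉ Sg →
      ∃ x y, (G.auxGraph W m).Adj x y ∧ x ∈ Sg ∧ y ∉ Sg ∧
        (∀ v, (v = x ∨ v = y) → v ∈ Zset → v = z) := by
    intro Sg z hzZa hzS hcS
    have hzZ : z ∈ Zset := hZaZ hzZa
    have hzT : z ∈ T.verts := hzZ.1
    obtain ⟨w0⟩ := htree.isConnected.preconnected ⟨z, hzT⟩ ⟨c, hc⟩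
    set p := w0.toPath with hpdef
    have hsupp : ∀ x ∈ p.1.support, (x : V) ∈ Zset → (x : V) = z := by
      intro x hx hxZ
      by_cases hxu : x = (⟨z, hzT⟩ : ↥T.verts)
      · rw [hxu]
      by_cases hxv : x = (⟨c, hc⟩ : ↥T.verts)
      · refine absurd (show c ∈ Zset from ?_) hcZ
        rw [← show (x : V) = c from congrArg Subtype.val hxv]
        exact hxZ
      obtain ⟨a, b, hab, h1, h2⟩ := internal_two_nbrs p.1 p.2 hx hxu hxv
      have h1' : T.Adj (x : V) (a : V) := by
        rw [← SimpleGraph.Subgraph.coe_adj]; exact h1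
      have h2' : T.Adj (x : V) (b : V) := by
        rw [← SimpleGraph.Subgraph.coe_adj]; exact h2
      have habV : (a : V) ≠ (b : V) := fun h => hab (Subtype.ext h)
      have h2card : 2 ≤ (T.neighborSet (x : V)).ncard := by
        have hsub : ({(a : V), (b : V)} : Set V) ⊆ T.neighborSet (x : V) := by
          intro v hv
          rcases hv with rfl | rfl
          · exact h1'
          · exact h2'
        calc 2 = ({(a : V), (b : V)} : Set V).ncard := (Set.ncard_pair habV).symm
          _ ≤ _ := Set.ncard_le_ncard hsub (Set.toFinite _)
      have := hxZ.2
      omega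
    obtain ⟨x, y, hadj, hxS, hyS, hxsup, hysup⟩ :=
      sg_exists_cross p.1 {x : ↥T.verts | (x : V) ∈ Sg} hzS hcS
    refine ⟨x, y, T.adj_sub (by rw [← SimpleGraph.Subgraph.coe_adj]; exact hadj),
      hxS, hyS, ?_⟩
    intro v hv hvZ
    rcases hv with rfl | rfl
    · exact hsupp x hxsup hvZ
    · exact hsupp y hysup hvZ
  -- The gadget network
  haveI : Fintype (GadArc G Zset Za E') := Fintype.ofFinite _
  set tl := gadTl G Zset Za E' with htl
  set hdm := gadHd G Zset Za fkh with hhdm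
  set k := Fintype.card (E' × Bool) with hk
  have hkq : k = 2 * Fintype.card E' := by
    rw [hk, Fintype.card_prod, Fintype.card_bool, Nat.mul_comm]
  have hkm : k ≤ m := hkq ▸ hm
  -- Cut bound
  have hcut : ∀ S : Finset (V ⊕ Unit), Sum.inr () ∈ S → Sum.inl c ∉ S →
      k ≤ (Finset.univ.filter
        (fun a : GadArc G Zset Za E' => tl a ∈ S ∧ hdm a ∉ S)).card := by
    intro S hsS hcS
    set Sg : Set V := {v | Sum.inl v ∈ S} with hSgdef
    by_cases hA : ∃ z ∈ Za, z ∈ Sg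
    · obtain ⟨z, hzZa, hzSg⟩ := hA
      obtain ⟨x, y, hadj, hxS, hyS, hclass⟩ := cross Sg z hzZa hzSg hcS
      obtain ⟨hxy, hor⟩ := hadj
      have hwalks : ∃ (x0 y0 : V), (x0 = x ∨ x0 = y) ∧ (y0 = x ∨ y0 = y) ∧
          ∃ P : Fin m → G.Walk x0 y0,
          (∀ i j, i ≠ j → ∀ e ∈ (P i).edges, e ∉ (P j).edges) ∧
          (∀ i, ∀ v ∈ (P i).support, v ∈ W → v = x0 ∨ v = y0) ∧
          (∀ i, ∃ e ∈ (P i).edges,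
            (G.src e ∈ Sg ∧ G.tgt e ∉ Sg) ∨ (G.tgt e ∈ Sg ∧ G.src e ∉ Sg)) := by
        rcases hor with h | h
        · obtain ⟨-, -, P, hnd, hdisj, hWsup⟩ := h
          refine ⟨x, y, Or.inl rfl, Or.inr rfl, P, hdisj, hWsup, fun i => ?_⟩
          exact (P i).exists_cross_edge Sg hxS hyS
        · obtain ⟨-, -, P, hnd, hdisj, hWsup⟩ := h
          refine ⟨y, x, Or.inr rfl, Or.inl rfl, P, hdisj, hWsup, fun i => ?_⟩
          obtain ⟨e, he, hcr⟩ := (P i).exists_cross_edge Sgᶜ hyS (by simpa using hxS)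
          refine ⟨e, he, ?_⟩
          rcases hcr with ⟨h1, h2⟩ | ⟨h1, h2⟩
          · exact Or.inr ⟨by simpa using h2, h1⟩
          · exact Or.inl ⟨by simpa using h2, h1⟩
      obtain ⟨x0, y0, hx0, hy0, P, hdisj, hWsup, hcross⟩ := hwalks
      have harc : ∀ i : Fin m, ∃ (a : GadArc G Zset Za E') (e : E),
          e ∈ (P i).edges ∧ gadE G Zset Za E' a = some e ∧
          a ∈ Finset.univ.filter
            (fun a : GadArc G Zset Za E' => tl a ∈ S ∧ hdm a ∉ S) := by
        intro i
        obtain ⟨e, he, hcr⟩ := hcross i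
        have hsupe := (P i).src_mem_support_of_mem_edges he
        have hend : ∀ v : V, (v = G.src e ∨ v = G.tgt e) → v ∈ Zset → v = z := by
          intro v hv hvZ
          have hvsup : v ∈ (P i).support := by
            rcases hv with rfl | rfl
            · exact hsupe.1
            · exact hsupe.2
          have hxy0 := hWsup i v hvsup (hZW hvZ)
          refine hclass v ?_ hvZ
          rcases hxy0 with rfl | rfl
          · rcases hx0 with h | h
            · exact Or.inl h
            · exact Or.inr h
          · rcases hy0 with h | h
            · exact Or.inl h
            · exact Or.inr h
        rcases hcr with ⟨hin, hout⟩ | ⟨hin, hout⟩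
        · have hall : gadAllowed G Zset Za (e, true) := by
            constructor
            · intro hmem
              exact hout (hend _ (Or.inr rfl) hmem ▸ hzSg)
            · by_cases hsZ : G.src e ∈ Zset
              · exact Or.inr (by
                  show G.src e ∈ Za
                  rw [hend _ (Or.inl rfl) hsZ]; exact hzZa)
              · exact Or.inl hsZ
          refine ⟨Sum.inl ⟨(e, true), hall⟩, e, he, rfl, ?_⟩
          rw [Finset.mem_filter]
          exact ⟨Finset.mem_univ _, by rw [htl]; simpa [hSgdef] using hin, by rw [hhdm]; simpa [hSgdef] using hout⟩
        · have hall : gadAllowed G Zset Za (e, false) := by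
            constructor
            · intro hmem
              exact hout (hend _ (Or.inl rfl) hmem ▸ hzSg)
            · by_cases hsZ : G.tgt e ∈ Zset
              · exact Or.inr (by
                  show G.tgt e ∈ Za
                  rw [hend _ (Or.inr rfl) hsZ]; exact hzZa)
              · exact Or.inl hsZ
          refine ⟨Sum.inl ⟨(e, false), hall⟩, e, he, rfl, ?_⟩
          rw [Finset.mem_filter]
          exact ⟨Finset.mem_univ _, by rw [htl]; simpa [hSgdef] using hin, by rw [hhdm]; simpa [hSgdef] using hout⟩
      choose aF eF heF hgF hmemF using harc
      have hminj : Set.InjOn aF ↑(Finset.univ : Finset (Fin m)) := by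
        intro i _ j _ hij
        by_contra hne
        have heq : eF i = eF j := by
          have h0 := (hgF i).symm.trans (hij ▸ hgF j)
          exact Option.some.inj h0
        exact hdisj i j hne (eF i) (heF i) (heq ▸ heF j)
      have hm_le := Finset.card_le_card_of_injOn aF (fun i _ => hmemF i) hminj
      rw [Finset.card_univ, Fintype.card_fin] at hm_le
      omega
    · push_neg at hA
      have hginj : Set.InjOn (fun pb : E' × Bool => (Sum.inr pb : GadArc G Zset Za E'))
          ↑(Finset.univ : Finset (E' × Bool)) := by
        intro pq _ q _ h
        exact Sum.inr.inj h
      have hmemf : ∀ pb : E' × Bool, (Sum.inr pb : GadArc G Zset Za E') ∈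
          Finset.univ.filter
            (fun a : GadArc G Zset Za E' => tl a ∈ S ∧ hdm a ∉ S) := by
        intro pb
        rw [Finset.mem_filter]
        refine ⟨Finset.mem_univ _, by rw [htl]; simpa using hsS, ?_⟩
        rw [hhdm]
        simp only [gadHd_inr]
        intro hmem'
        exact hA (fkh pb) ⟨pb, rfl⟩ hmem'
      have hcle := Finset.card_le_card_of_injOn _ (fun pb _ => hmemf pb) hginj
      rw [Finset.card_univ] at hcle
      exact hcle
  -- Max flow with minimal support
  have hst : (Sum.inr () : V ⊕ Unit) ≠ Sum.inl c := by simp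
  obtain ⟨f₀, hf₀c, hf₀v⟩ := DFlow.maxflow tl hdm (Sum.inr ()) (Sum.inl c) hst k hcut
  set Good := Finset.univ.filter (fun f : GadArc G Zset Za E' → Bool =>
    DFlow.Conserv tl hdm f (Sum.inr ()) (Sum.inl c) ∧
      (k : ℤ) ≤ DFlow.fdiv tl hdm f (Sum.inr ())) with hGood
  obtain ⟨f, hfmem, hfmin⟩ := Finset.exists_min_image Good
    (fun f => (Finset.univ.filter (fun a => f a = true)).card)
    ⟨f₀, Finset.mem_filter.mpr ⟨Finset.mem_univ _, hf₀c, hf₀v⟩⟩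
  obtain ⟨-, hfc, hfv⟩ := Finset.mem_filter.mp hfmem
  -- no antiparallel pair of used real arcs
  have hnap : ∀ (e : E) (h1 : gadAllowed G Zset Za (e, true))
      (h2 : gadAllowed G Zset Za (e, false)),
      ¬(f (Sum.inl ⟨(e, true), h1⟩) = true ∧ f (Sum.inl ⟨(e, false), h2⟩) = true) := by
    rintro e h1 h2 ⟨hu1, hu2⟩
    set a₁ : GadArc G Zset Za E' := Sum.inl ⟨(e, true), h1⟩ with ha₁
    set a₂ : GadArc G Zset Za E' := Sum.inl ⟨(e, false), h2⟩ with ha₂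
    have hne12 : a₁ ≠ a₂ := by
      rw [ha₁, ha₂]
      intro h
      have h' := Sum.inl.inj h
      rw [Subtype.mk.injEq] at h'
      exact Bool.noConfusion (congrArg Prod.snd h')
    set f' := Function.update (Function.update f a₁ false) a₂ false with hf'
    have hcancel : ∀ v, DFlow.contribB tl hdm true a₁ v
        + DFlow.contribB tl hdm true a₂ v = 0 := by
      intro v
      have e1 : tl a₁ = hdm a₂ := by rw [htl, hhdm, ha₁, ha₂]; rfl
      have e2 : hdm a₁ = tl a₂ := by rw [htl, hhdm, ha₁, ha₂]; rfl
      simp only [DFlow.contribB, if_true, e1, e2]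
      ring
    have hdiv : ∀ v, DFlow.fdiv tl hdm f' v = DFlow.fdiv tl hdm f v := by
      intro v
      rw [hf', DFlow.fdiv_update, DFlow.fdiv_update,
        Function.update_of_ne (Ne.symm hne12)]
      rw [hu1, hu2]
      simp only [DFlow.contribB_false]
      have := hcancel v
      linarith
    have hmem' : f' ∈ Good := by
      rw [hGood, Finset.mem_filter]
      refine ⟨Finset.mem_univ _, fun v hv1 hv2 => ?_, ?_⟩
      · rw [hdiv v]; exact hfc v hv1 hv2
      · rw [hdiv]; exact hfv
    have hssub : Finset.univ.filter (fun a => f' a = true) ⊂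
        Finset.univ.filter (fun a => f a = true) := by
      constructor
      · intro a ha
        rw [Finset.mem_filter] at ha ⊢
        refine ⟨Finset.mem_univ _, ?_⟩
        by_cases h2' : a = a₂
        · exfalso
          have hfa : f' a = false := by rw [hf', h2', Function.update_self]
          rw [hfa] at ha
          exact Bool.noConfusion ha.2
        by_cases h1' : a = a₁
        · exfalso
          have hfa : f' a = false := by
            rw [hf', h1', Function.update_of_ne hne12, Function.update_self]
          rw [hfa] at ha
          exact Bool.noConfusion ha.2
        · have hfa : f' a = f a := by
            rw [hf', Function.update_of_ne h2', Function.update_of_ne h1']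
          rw [hfa] at ha
          exact ha.2
      · intro hcon
        have ha₁mem : a₁ ∈ Finset.univ.filter (fun a => f a = true) :=
          Finset.mem_filter.mpr ⟨Finset.mem_univ _, hu1⟩
        have hmm := hcon ha₁mem
        rw [Finset.mem_filter] at hmm
        have h1f : f' a₁ = true := hmm.2
        rw [hf', Function.update_of_ne hne12, Function.update_self] at h1f
        exact Bool.noConfusion h1f
    have hle := hfmin f' hmem'
    have hlt := Finset.card_lt_card hssub
    omega
  -- Decompose into k arc-disjoint trails
  obtain ⟨L, hLlen, hLprop, hLpair⟩ :=
    DFlow.decomp tl hdm (Sum.inr ()) (Sum.inl c) k f hfc hfv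
  set idx : Fin k → Fin L.length := fun i => ⟨i.1, by rw [hLlen]; exact i.2⟩ with hidx
  have hmemL : ∀ i : Fin k, L.get (idx i) ∈ L := fun i => L.get_mem _
  have hstructs : ∀ i : Fin k, ∃ (fk : E' × Bool) (gw : G.Walk (fkh fk) c),
      (Sum.inr fk) ∈ (L.get (idx i)).arcs ∧
      gw.edges = (L.get (idx i)).arcs.filterMap (gadE G Zset Za E') ∧
      (∀ a ∈ (L.get (idx i)).arcs, a ≠ Sum.inr fk → ∃ r, a = Sum.inl r) ∧
      (∀ v ∈ gw.support, v = fkh fk ∨ v ∉ Zset) := by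
    intro i
    exact gad_trail (G := G) (Zs := Zset) (Za := Za) (fkhead := fkh) c (L.get (idx i))
  choose Fk gwF hfkmem hedgesF honefakeF hsuppF using hstructs
  have hLget : ∀ i : Fin k, (L.get (idx i)).arcs.Nodup ∧
      ∀ a ∈ (L.get (idx i)).arcs, f a = true := fun i => hLprop _ (hmemL i)
  have husedT : ∀ i : Fin k, ∀ a ∈ (L.get (idx i)).arcs, f a = true :=
    fun i => (hLget i).2
  have hpairget := List.pairwise_iff_get.mp hLpair
  have hdisjT : ∀ i j : Fin k, i ≠ j →
      ∀ a ∈ (L.get (idx i)).arcs, a ∉ (L.get (idx j)).arcs := by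
    intro i j hij a hai haj
    have hijx : idx i ≠ idx j := by
      intro h
      have hval := congrArg Fin.val h
      exact hij (Fin.ext hval)
    rcases lt_or_gt_of_ne hijx with h | h
    · exact hpairget _ _ h a hai haj
    · exact hpairget _ _ h a haj hai
  have hFkinj : Function.Injective Fk := by
    intro i j h
    by_contra hij
    exact hdisjT i j hij _ (hfkmem i) (h ▸ hfkmem j)
  have hFkbij : Function.Bijective Fk :=
    (Fintype.bijective_iff_injective_and_card Fk).mpr
      ⟨hFkinj, by rw [Fintype.card_fin, hk]⟩
  choose ψ hψ using hFkbij.surjective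
  have hginjused : ∀ (a a' : GadArc G Zset Za E') (e : E), f a = true → f a' = true →
      gadE G Zset Za E' a = some e → gadE G Zset Za E' a' = some e → a = a' := by
    rintro (⟨⟨e1, b1⟩, hall1⟩ | pb) a' e hf1 hf2 hg1 hg2
    · rcases a' with ⟨⟨e2, b2⟩, hall2⟩ | pb'
      · have hee : e1 = e2 := by
          have h1' : e1 = e := by simpa using hg1
          have h2' : e2 = e := by simpa using hg2
          rw [h1', h2']
        cases hee
        cases b1 <;> cases b2
        · rfl
        · exact absurd ⟨hf2, hf1⟩ (hnap e1 hall2 hall1)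
        · exact absurd ⟨hf1, hf2⟩ (hnap e1 hall1 hall2)
        · rfl
      · exact absurd hg2 (by simp)
    · exact absurd hg1 (by simp)
  have hstart : ∀ pb : E' × Bool, fkh (Fk (ψ pb)) = fkh pb := fun pb => by rw [hψ pb]
  let leg : ∀ pb : E' × Bool, G.Walk (fkh pb) c := fun pb => (hstart pb) ▸ gwF (ψ pb)
  have leg_edges : ∀ pb, (leg pb).edges
      = (L.get (idx (ψ pb))).arcs.filterMap (gadE G Zset Za E') := fun pb =>
    (Multigraph.walk_cast_edges (hstart pb) _).trans (hedgesF (ψ pb))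
  have leg_supp : ∀ pb, ∀ v ∈ (leg pb).support, v = fkh pb ∨ v ∉ Zset := by
    intro pb v hv
    rw [show (leg pb).support = (gwF (ψ pb)).support from
      Multigraph.walk_cast_support (hstart pb) _] at hv
    rcases hsuppF (ψ pb) v hv with h | h
    · left; rw [h, hstart pb]
    · right; exact h
  have leg_nodup : ∀ pb, (leg pb).edges.Nodup := by
    intro pb
    rw [leg_edges pb]
    refine nodup_filterMap' _ (hLget (ψ pb)).1 ?_
    intro a ha a' ha' b h1 h2
    exact hginjused a a' b (husedT _ _ ha) (husedT _ _ ha') h1 h2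
  have leg_disj : ∀ pb pb', pb ≠ pb' → ∀ x ∈ (leg pb).edges, x ∉ (leg pb').edges := by
    intro pb pb' hne x hx hx'
    rw [leg_edges] at hx hx'
    obtain ⟨a, ha, hga⟩ := List.mem_filterMap.mp hx
    obtain ⟨a', ha', hga'⟩ := List.mem_filterMap.mp hx'
    obtain rfl : a = a' :=
      hginjused a a' x (husedT _ _ ha) (husedT _ _ ha') hga hga'
    have hψne : ψ pb ≠ ψ pb' := fun h => hne ((hψ pb).symm.trans (h ▸ hψ pb'))
    exact hdisjT (ψ pb) (ψ pb') hψne a ha ha'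
  -- Assemble the strong immersion
  refine ⟨⟨θ, hθinj, fun e => ((leg (e, true)).append (leg (e, false)).reverse),
    ?_, ?_, ?_⟩⟩
  · intro e
    rw [Multigraph.Walk.edges_append, Multigraph.Walk.edges_reverse]
    refine List.Nodup.append (leg_nodup _) (List.nodup_reverse.mpr (leg_nodup _)) ?_
    intro x hx hx'
    rw [List.mem_reverse] at hx'
    exact leg_disj (e, true) (e, false) (by simp) x hx hx'
  · intro e e' hne x hx hx'
    rw [Multigraph.Walk.edges_append, Multigraph.Walk.edges_reverse,
      List.mem_append, List.mem_reverse] at hx hx'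
    have hpairs : ∀ b b' : Bool, ((e, b) : E' × Bool) ≠ (e', b') := fun b b' h =>
      hne (congrArg Prod.fst h)
    rcases hx with h1 | h1 <;> rcases hx' with h2 | h2
    · exact leg_disj _ _ (hpairs true true) x h1 h2
    · exact leg_disj _ _ (hpairs true false) x h1 h2
    · exact leg_disj _ _ (hpairs false true) x h1 h2
    · exact leg_disj _ _ (hpairs false false) x h1 h2
  · intro e u hu1 hu2 hmem
    obtain h | h := Multigraph.Walk.mem_support_append _ _ hmem
    · rcases leg_supp (e, true) _ h with h' | h'
      · exact hu1 (hθinj h')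
      · exact h' (hθZ u)
    · rw [Multigraph.Walk.support_reverse, List.mem_reverse] at h
      rcases leg_supp (e, false) _ h with h' | h'
      · exact hu2 (hθinj h')
      · exact h' (hθZ u)
end

section
/- Let G be a graph with a path-like decomposition P of G−A with respect to W∖A, for some A ⊆ W, such that the neighborhood of every vertex of A is p-bounded in P and |W∖A| = m ≥ 2|A|p + 1. Then there exists an index 1 ≤ i ≤ m such that no vertex of A has a neighbor in {x_i} ∪ B_{i−1} ∪ B_i, where x₁,...,x_m is the ordering and B₀,...,B_m the bags of P. -/
open scoped Classical

private lemma filter_card_le_aux {n : ℕ} {β : Type*} [Fintype β] (f : Fin n → β)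
    (hf : Function.Injective f) (T : Set β) [DecidablePred fun i => f i ∈ T] :
    (Finset.univ.filter fun i => f i ∈ T).card ≤ T.ncard := by
  classical
  rw [Set.ncard_eq_toFinset_card' T]
  apply Finset.card_le_card_of_injOn f
  · intro i hi
    simp only [Finset.mem_coe, Finset.mem_filter] at hi
    simpa using hi.2
  · exact hf.injOn

/-- pigeonhole for `p`-bounded neighbourhoods: if `|W ∖ A| ≥ 2|A|p + 1`, some
index `i` has no vertex of `A` with a neighbour in `{x_i} ∪ B_{i−1} ∪ B_i`. -/
theorem exists_index_avoiding_A_neighbours {V E : Type*} [Fintype V] [Fintype E]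
    (G : Multigraph V E) (W A : Set V) (p : ℕ) (hA : A ⊆ W)
    (P : Multigraph.PathLikeDecomp G {v | v ∉ A} (W \ A))
    (hbd : ∀ v ∈ A, P.Bounded p (G.nbhd v))
    (hm : 2 * A.ncard * p + 1 ≤ P.t) :
    ∃ i : Fin P.t, ∀ v ∈ A, ∀ u ∈ G.nbhd v,
      u ≠ P.ord i ∧ u ∉ P.bag i.castSucc ∧ u ∉ P.bag i.succ := by
  classical
  set B : V → Finset (Fin P.t) := fun v => Finset.univ.filter fun i =>
    P.ord i ∈ G.nbhd v ∨ (P.bag i.castSucc ∩ G.nbhd v).Nonempty ∨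
      (P.bag i.succ ∩ G.nbhd v).Nonempty with hBdef
  have hB : ∀ v ∈ A, (B v).card ≤ 2 * p := by
    intro v hv
    have hbound := hbd v hv
    unfold Multigraph.PathLikeDecomp.Bounded at hbound
    have hsub : B v ⊆ (Finset.univ.filter fun i => P.ord i ∈ (W \ A) ∩ G.nbhd v) ∪
        ((Finset.univ.filter fun i : Fin P.t =>
            (i.castSucc : Fin (P.t + 1)) ∈ {j | (P.bag j ∩ G.nbhd v).Nonempty}) ∪
         (Finset.univ.filter fun i : Fin P.t =>
            (i.succ : Fin (P.t + 1)) ∈ {j | (P.bag j ∩ G.nbhd v).Nonempty})) := by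
      intro i hi
      simp only [hBdef, Finset.mem_filter, Finset.mem_univ, true_and] at hi
      simp only [Finset.mem_union, Finset.mem_filter, Finset.mem_univ, true_and,
        Set.mem_setOf_eq]
      rcases hi with h | h | h
      · left
        refine ⟨?_, h⟩
        have hr : P.ord i ∈ Set.range P.ord := ⟨i, rfl⟩
        rwa [P.ord_range] at hr
      · right; left; exact h
      · right; right; exact h
    have h1 : (Finset.univ.filter fun i => P.ord i ∈ (W \ A) ∩ G.nbhd v).card ≤
        ((W \ A) ∩ G.nbhd v).ncard := filter_card_le_aux P.ord P.ord_inj _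
    have h2 : (Finset.univ.filter fun i : Fin P.t =>
        (i.castSucc : Fin (P.t + 1)) ∈ {j | (P.bag j ∩ G.nbhd v).Nonempty}).card ≤
        Set.ncard {j : Fin (P.t + 1) | (P.bag j ∩ G.nbhd v).Nonempty} :=
      filter_card_le_aux _ (Fin.castSucc_injective _) _
    have h3 : (Finset.univ.filter fun i : Fin P.t =>
        (i.succ : Fin (P.t + 1)) ∈ {j | (P.bag j ∩ G.nbhd v).Nonempty}).card ≤
        Set.ncard {j : Fin (P.t + 1) | (P.bag j ∩ G.nbhd v).Nonempty} :=
      filter_card_le_aux _ (Fin.succ_injective _) _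
    calc (B v).card ≤ _ := Finset.card_le_card hsub
      _ ≤ _ + _ := Finset.card_union_le _ _
      _ ≤ ((W \ A) ∩ G.nbhd v).ncard +
          (Set.ncard {j : Fin (P.t + 1) | (P.bag j ∩ G.nbhd v).Nonempty} +
           Set.ncard {j : Fin (P.t + 1) | (P.bag j ∩ G.nbhd v).Nonempty}) := by
        refine Nat.add_le_add h1 (le_trans (Finset.card_union_le _ _) (Nat.add_le_add h2 h3))
      _ ≤ 2 * p := by omega
  set big : Finset (Fin P.t) := A.toFinset.biUnion B with hbig
  have hbigcard : big.card ≤ A.ncard * (2 * p) := by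
    have := Finset.card_biUnion_le_card_mul A.toFinset B (2 * p)
      (fun v hv => hB v (Set.mem_toFinset.mp hv))
    rwa [← Set.ncard_eq_toFinset_card' A] at this
  have hlt : big.card < Fintype.card (Fin P.t) := by
    have hnl : A.ncard * (2 * p) = 2 * A.ncard * p := by ring
    rw [Fintype.card_fin]; omega
  have hne : (bigᶜ : Finset (Fin P.t)).Nonempty := by
    rw [← Finset.card_pos, Finset.card_compl]
    omega
  obtain ⟨i, hi⟩ := hne
  rw [Finset.mem_compl] at hi
  refine ⟨i, fun v hv u hu => ?_⟩
  have hiB : i ∉ B v := fun h => hi (Finset.mem_biUnion.mpr ⟨v, Set.mem_toFinset.mpr hv, h⟩)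
  simp only [hBdef, Finset.mem_filter, Finset.mem_univ, true_and, not_or] at hiB
  obtain ⟨hn1, hn2, hn3⟩ := hiB
  refine ⟨fun h => hn1 (h ▸ hu), fun h => hn2 ⟨u, h, hu⟩, fun h => hn3 ⟨u, h, hu⟩⟩
end
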